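/- For the scalar linear ODE ż = λz, the Yoshida-composed method Y4 (composition of ALF2 steps with step sizes ah, bh, ah where a = 1/(2 − 2^{1/3}), b = 1 − 2a), initialized with v₀ = λz₀, produces a position z_out whose Taylor expansion in h agrees with z₀e^{λh} through order h⁴, i.e., |z_out − z₀e^{λh}| = O(h⁵). -/

import Mathlib

/-- One ALF step of size `s` for the scalar linear ODE `ż = λz`. -/
noncomputable def alfStep (lam s : ℝ) (p : ℝ × ℝ) : ℝ × ℝ :=
  (p.1 + s * (lam * (p.1 + (s / 2) * p.2)),
   2 * lam * (p.1 + (s / 2) * p.2) - p.2)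

/-- ALF2 with step `s`: two ALF steps of size `s/2`. -/
noncomputable def alf2 (lam s : ℝ) (p : ℝ × ℝ) : ℝ × ℝ :=
  alfStep lam (s / 2) (alfStep lam (s / 2) p)

/-- The explicit `O(h⁵)` error coefficient polynomial. -/
noncomputable def errE (lam a h : ℝ) : ℝ :=
  (1/24 : ℝ) * a + (-1/16 : ℝ) * a^2 + (-1/144 : ℝ) * lam * h +
  (1/24 : ℝ) * lam * h * a + (-1/16 : ℝ) * lam * h * a^2 +
  (-1/384 : ℝ) * lam^2 * h^2 + (1/72 : ℝ) * lam^2 * h^2 * a +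
  (-1/48 : ℝ) * lam^2 * h^2 * a^2

/-- Key algebraic identity: if `a` satisfies the Yoshida order condition, the
Y4 position equals the degree-4 Taylor polynomial plus an explicit `h^5` term. -/
lemma y4_key (lam z₀ a h : ℝ) (h3 : -6*a^3 + 12*a^2 - 6*a + 1 = 0) :
    (alf2 lam (a * h) (alf2 lam ((1 - 2*a) * h) (alf2 lam (a * h) (z₀, lam * z₀)))).1
      = z₀ * (1 + lam*h + (lam*h)^2/2 + (lam*h)^3/6 + (lam*h)^4/24)
        + z₀ * h^5 * (lam^5 * errE lam a h) := by
  simp only [alf2, alfStep, errE]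
  linear_combination (z₀ * ((-1/24 : ℝ) * lam^3 * h^3 + (-1/24 : ℝ) * lam^4 * h^4 +
    (-1/24 : ℝ) * lam^5 * h^5 * a + (1/16 : ℝ) * lam^5 * h^5 * a^2 +
    (1/144 : ℝ) * lam^6 * h^6 + (-1/48 : ℝ) * lam^6 * h^6 * a^2 +
    (1/24 : ℝ) * lam^6 * h^6 * a^3 + (1/384 : ℝ) * lam^7 * h^7 +
    (1/576 : ℝ) * lam^7 * h^7 * a + (-1/192 : ℝ) * lam^7 * h^7 * a^3 +
    (1/96 : ℝ) * lam^7 * h^7 * a^4)) * h3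

lemma yoshida_condition :
    -6*(1 / (2 - (2 : ℝ) ^ ((1 : ℝ) / 3)))^3 + 12*(1 / (2 - (2 : ℝ) ^ ((1 : ℝ) / 3)))^2
      - 6*(1 / (2 - (2 : ℝ) ^ ((1 : ℝ) / 3))) + 1 = 0 := by
  have hc : ((2 : ℝ) ^ ((1 : ℝ) / 3)) ^ (3 : ℕ) = 2 := by
    rw [← Real.rpow_natCast ((2:ℝ) ^ ((1:ℝ)/3)) 3, ← Real.rpow_mul (by norm_num)]
    norm_num
  have hlt : (2 : ℝ) ^ ((1 : ℝ) / 3) < 2 := by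
    nth_rewrite 2 [show (2:ℝ) = (2:ℝ) ^ ((1:ℝ)) by norm_num]
    exact Real.rpow_lt_rpow_left_iff (by norm_num) |>.mpr (by norm_num)
  have hne : (2 : ℝ) - (2 : ℝ) ^ ((1 : ℝ) / 3) ≠ 0 := by linarith
  field_simp
  linear_combination (-1 : ℝ) * hc

theorem y4_linear_fourth_order (lam z₀ : ℝ) :
    let a : ℝ := 1 / (2 - (2 : ℝ) ^ ((1 : ℝ) / 3))
    let b : ℝ := 1 - 2 * a
    ∃ C : ℝ, ∃ δ > (0 : ℝ), ∀ h : ℝ, |h| ≤ δ →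
      |(alf2 lam (a * h) (alf2 lam (b * h) (alf2 lam (a * h) (z₀, lam * z₀)))).1
        - z₀ * Real.exp (lam * h)| ≤ C * |h| ^ 5 := by
  intro a b
  have h3 : -6*a^3 + 12*a^2 - 6*a + 1 = 0 := yoshida_condition
  -- bound the error polynomial on [-1,1]
  obtain ⟨M, hM⟩ := (isCompact_Icc (a := (-1:ℝ)) (b := 1)).exists_bound_of_continuousOn
    (f := fun h => errE lam a h) (by unfold errE; fun_prop)
  set δ : ℝ := min 1 (1 / (|lam| + 1)) with hδdef
  have hδpos : 0 < δ := by
    apply lt_min one_pos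
    positivity
  refine ⟨|z₀| * |lam|^5 * (M + 1), δ, hδpos, fun h hh => ?_⟩
  have hh1 : |h| ≤ 1 := le_trans hh (min_le_left _ _)
  have hxl : |lam * h| ≤ 1 := by
    rw [abs_mul]
    have h2 : |h| ≤ 1 / (|lam| + 1) := le_trans hh (min_le_right _ _)
    have hp : (0:ℝ) < |lam| + 1 := by positivity
    rw [le_div_iff₀ hp] at h2
    have h3' : (|lam| + 1) * |h| ≤ 1 := by nlinarith
    nlinarith [abs_nonneg lam, abs_nonneg h]
  -- Taylor bound for exp
  have hexp := Real.exp_bound (x := lam * h) hxl (n := 5) (by norm_num)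
  norm_num [Nat.factorial] at hexp
  have hsum : (∑ i ∈ Finset.range 5, (lam * h) ^ i / (Nat.factorial i : ℝ))
      = 1 + lam*h + (lam*h)^2/2 + (lam*h)^3/6 + (lam*h)^4/24 := by
    simp [Finset.sum_range_succ, Nat.factorial]
  rw [hsum] at hexp
  have hME : |errE lam a h| ≤ M := by
    have := hM h (by constructor <;> [linarith [abs_le.mp hh1 |>.1]; exact (abs_le.mp hh1).2])
    simpa [Real.norm_eq_abs] using this
  have hkey := y4_key lam z₀ a h h3
  have hb : b = 1 - 2*a := rfl
  rw [hb]
  rw [hkey]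
  have hbound1 : |z₀ * h^5 * (lam^5 * errE lam a h)| ≤ |z₀| * |h|^5 * (|lam|^5 * M) := by
    rw [abs_mul, abs_mul, abs_mul, abs_pow, abs_pow]
    gcongr
  have hbound2 : |z₀ * (1 + lam*h + (lam*h)^2/2 + (lam*h)^3/6 + (lam*h)^4/24)
      - z₀ * Real.exp (lam * h)| ≤ |z₀| * (|lam|^5 * |h|^5) := by
    rw [← mul_sub, abs_mul]
    have : |1 + lam*h + (lam*h)^2/2 + (lam*h)^3/6 + (lam*h)^4/24 - Real.exp (lam*h)|
        ≤ |lam * h| ^ 5 := by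
      rw [abs_sub_comm]
      refine le_trans hexp ?_
      rw [abs_mul]
      nlinarith [pow_nonneg (abs_nonneg (lam*h)) 5, pow_nonneg (mul_nonneg (abs_nonneg lam) (abs_nonneg h)) 5]
    calc |z₀| * |1 + lam*h + (lam*h)^2/2 + (lam*h)^3/6 + (lam*h)^4/24 - Real.exp (lam*h)|
        ≤ |z₀| * |lam * h| ^ 5 := by gcongr
      _ = |z₀| * (|lam|^5 * |h|^5) := by rw [abs_mul, mul_pow]
  calc |z₀ * (1 + lam*h + (lam*h)^2/2 + (lam*h)^3/6 + (lam*h)^4/24)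
        + z₀ * h^5 * (lam^5 * errE lam a h) - z₀ * Real.exp (lam * h)|
      ≤ |z₀ * (1 + lam*h + (lam*h)^2/2 + (lam*h)^3/6 + (lam*h)^4/24)
          - z₀ * Real.exp (lam * h)| + |z₀ * h^5 * (lam^5 * errE lam a h)| := by
        rw [show z₀ * (1 + lam*h + (lam*h)^2/2 + (lam*h)^3/6 + (lam*h)^4/24)
          + z₀ * h^5 * (lam^5 * errE lam a h) - z₀ * Real.exp (lam * h)
          = (z₀ * (1 + lam*h + (lam*h)^2/2 + (lam*h)^3/6 + (lam*h)^4/24)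
            - z₀ * Real.exp (lam * h)) + z₀ * h^5 * (lam^5 * errE lam a h) by ring]
        exact abs_add_le _ _
    _ ≤ |z₀| * (|lam|^5 * |h|^5) + |z₀| * |h|^5 * (|lam|^5 * M) := add_le_add hbound2 hbound1
    _ = |z₀| * |lam|^5 * (M + 1) * |h|^5 := by ring
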